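/- Consider the matrix ODE along a curve: for continuous functions f, g : [0,1] → ℂ and a parameter t ∈ ℂ, let X(s,t) ∈ Matrix (Fin 2) (Fin 2) ℂ solve ∂ₛX(s,t) = X(s,t)·[[0, t·f(s)],[g(s), 0]] with X(0,t) = Id, and set M(t) = X(1,t). Define the iterated integrals I₀ = ∫₀¹ f(s) ds, I₁ = ∫₀¹ f(s)·(∫₀ˢ g(v) dv) ds, I₂ = ∫₀¹ g(s)·(∫₀ˢ f(u)·(∫₀ᵘ g(v) dv) du) ds. Assume X is twice continuously differentiable jointly in (s,t) and ∫₀¹ g(s) ds = 0. Then the map M̃ : λ ↦ M(λ⁻¹(λ−1)²) satisfies (d²_λ M̃)(1) = 2·[[−I₁, I₀],[I₂, I₁]]. -/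

import Mathlib

attribute [local instance] Matrix.normedAddCommGroup Matrix.normedSpace

open Set

noncomputable abbrev E2 : Type := Matrix (Fin 2) (Fin 2) ℂ

/-- Multiplication of 2×2 complex matrices as a continuous ℝ-bilinear map. -/
noncomputable def mulL : E2 →L[ℝ] E2 →L[ℝ] E2 :=
  LinearMap.toContinuousLinearMap
  { toFun := fun a => LinearMap.toContinuousLinearMap (LinearMap.mulLeft ℝ a)
    map_add' := by intro a b; ext x; simp [add_mul]
    map_smul' := by intro c a; ext x; simp [smul_mul_assoc] }

@[simp] lemma mulL_apply (a b : E2) : mulL a b = a * b := rfl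

lemma HasFDerivAt.matmul {α : Type*} [NormedAddCommGroup α] [NormedSpace ℝ α]
    {u v : α → E2} {u' v' : α →L[ℝ] E2} {x : α}
    (hu : HasFDerivAt u u' x) (hv : HasFDerivAt v v' x) :
    HasFDerivAt (fun y => u y * v y)
      (mulL.precompR α (u x) v' + mulL.precompL α u' (v x)) x :=
  mulL.hasFDerivAt_of_bilinear hu hv

lemma HasDerivAt.matmul {u v : ℝ → E2} {u' v' : E2} {x : ℝ}
    (hu : HasDerivAt u u' x) (hv : HasDerivAt v v' x) :
    HasDerivAt (fun y => u y * v y) (u' * v x + u x * v') x := by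
  have h := (mulL.hasFDerivAt_of_bilinear hu.hasFDerivAt hv.hasFDerivAt).hasDerivAt
  refine h.congr_deriv ?_
  change u x * ((1:ℝ) • v') + ((1:ℝ) • u') * v x = _
  simp [add_comm]

lemma norm_matmul_le (a b : E2) : ‖a * b‖ ≤ 2 * ‖a‖ * ‖b‖ := by
  rw [Matrix.norm_le_iff (by positivity)]
  intro i j
  calc ‖(a * b) i j‖ = ‖∑ k, a i k * b k j‖ := by rw [Matrix.mul_apply]
    _ ≤ ∑ k, ‖a i k * b k j‖ := norm_sum_le _ _
    _ ≤ ∑ _k : Fin 2, ‖a‖ * ‖b‖ := by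
        refine Finset.sum_le_sum fun k _ => ?_
        rw [norm_mul]
        exact mul_le_mul (Matrix.norm_entry_le_entrywise_sup_norm a)
          (Matrix.norm_entry_le_entrywise_sup_norm b) (norm_nonneg _) (norm_nonneg _)
    _ = 2 * ‖a‖ * ‖b‖ := by simp [Finset.sum_const]; ring

open intervalIntegral MeasureTheory

/-- Uniqueness of ODE solutions on `[0,1]` with derivatives only required on `(0,1)`. -/
lemma myUnique {E : Type*} [NormedAddCommGroup E] [NormedSpace ℝ E]
    {v : ℝ → E → E} {K : NNReal} (hv : ∀ t, LipschitzWith K (v t))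
    {φ ψ : ℝ → E}
    (hφc : ContinuousOn φ (Icc 0 1)) (hφd : ∀ s ∈ Ioo (0:ℝ) 1, HasDerivAt φ (v s (φ s)) s)
    (hψc : ContinuousOn ψ (Icc 0 1)) (hψd : ∀ s ∈ Ioo (0:ℝ) 1, HasDerivAt ψ (v s (ψ s)) s)
    (h0 : φ 0 = ψ 0) : EqOn φ ψ (Icc 0 1) := by
  intro b hb
  rcases eq_or_lt_of_le hb.1 with h | hb0
  · rw [← h]; exact h0
  -- b > 0
  have key : ∀ ε ∈ Ioo (0:ℝ) b, dist (φ b) (ψ b) ≤ dist (φ ε) (ψ ε) * Real.exp K := by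
    intro ε hε
    have hεb : ε ≤ b := hε.2.le
    have hsub : Ico ε b ⊆ Ioo (0:ℝ) 1 := fun t ht => ⟨lt_of_lt_of_le hε.1 ht.1,
      lt_of_lt_of_le ht.2 hb.2⟩
    have hsub2 : Icc ε b ⊆ Icc (0:ℝ) 1 := fun t ht => ⟨le_trans hε.1.le ht.1,
      le_trans ht.2 hb.2⟩
    have h := dist_le_of_trajectories_ODE (v := v) (K := K) hv
      (hφc.mono hsub2) (fun t ht => (hφd t (hsub ht)).hasDerivWithinAt)
      (hψc.mono hsub2) (fun t ht => (hψd t (hsub ht)).hasDerivWithinAt)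
      le_rfl b (right_mem_Icc.2 hεb)
    refine h.trans (mul_le_mul_of_nonneg_left ?_ dist_nonneg)
    refine Real.exp_le_exp.2 ?_
    have h1 : b - ε ≤ 1 := by
      have := hb.2; have := hε.1; linarith
    calc (K : ℝ) * (b - ε) ≤ (K : ℝ) * 1 :=
          mul_le_mul_of_nonneg_left h1 K.coe_nonneg
      _ = K := mul_one _
  have hlim : Filter.Tendsto (fun ε => dist (φ ε) (ψ ε) * Real.exp K)
      (nhdsWithin 0 (Ioo (0:ℝ) b)) (nhds 0) := by
    have hc : Filter.Tendsto (fun ε => dist (φ ε) (ψ ε)) (nhdsWithin 0 (Icc (0:ℝ) 1))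
        (nhds (dist (φ 0) (ψ 0))) := by
      have h0' : (0:ℝ) ∈ Icc (0:ℝ) 1 := ⟨le_rfl, zero_le_one⟩
      exact ((hφc 0 h0').dist (hψc 0 h0'))
    have hmono : nhdsWithin (0:ℝ) (Ioo (0:ℝ) b) ≤ nhdsWithin 0 (Icc (0:ℝ) 1) :=
      nhdsWithin_mono _ (fun t ht => ⟨ht.1.le, le_trans ht.2.le hb.2⟩)
    have := (hc.comp (Filter.tendsto_id.mono_left hmono))
    rw [h0, dist_self] at hc
    simpa using (hc.mono_left hmono).mul_const (Real.exp K)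
  haveI : (nhdsWithin (0:ℝ) (Ioo (0:ℝ) b)).NeBot := by
    apply IsGLB.nhdsWithin_neBot (isGLB_Ioo hb0)
    exact nonempty_Ioo.2 hb0
  have hle : dist (φ b) (ψ b) ≤ 0 := by
    refine ge_of_tendsto hlim ?_
    filter_upwards [self_mem_nhdsWithin] with ε hε using key ε hε
  exact dist_le_zero.1 hle

lemma prim_deriv {h : ℝ → ℂ} (hh : ContinuousOn h (Icc 0 1)) {s : ℝ} (hs : s ∈ Ioo (0:ℝ) 1) :
    HasDerivAt (fun u => ∫ v in (0:ℝ)..u, h v) (h s) s := by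
  have hnhds : Icc (0:ℝ) 1 ∈ nhds s := Icc_mem_nhds hs.1 hs.2
  refine integral_hasDerivAt_right ?_ ?_ ?_
  · exact (hh.mono (by rw [uIcc_of_le hs.1.le]; exact Icc_subset_Icc le_rfl hs.2.le)
      : ContinuousOn h (uIcc 0 s)).intervalIntegrable
  · exact ⟨Icc 0 1, hnhds, hh.aestronglyMeasurable measurableSet_Icc⟩
  · exact hh.continuousAt hnhds

lemma prim_cont {h : ℝ → ℂ} (hh : ContinuousOn h (Icc 0 1)) :
    ContinuousOn (fun u => ∫ v in (0:ℝ)..u, h v) (Icc 0 1) :=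
  (uIcc_of_le (zero_le_one : (0:ℝ) ≤ 1)) ▸ continuousOn_primitive_interval (by
    rw [uIcc_of_le (zero_le_one : (0:ℝ) ≤ 1)]
    exact hh.integrableOn_compact isCompact_Icc)




def SS : Set (ℝ × ℂ) := Icc (0:ℝ) 1 ×ˢ (univ : Set ℂ)

lemma mem_SS {s : ℝ} {t : ℂ} : (s, t) ∈ SS ↔ s ∈ Icc (0:ℝ) 1 := by
  simp [SS]

section slices
variable (f g : ℝ → ℂ) (X : ℝ × ℂ → E2)
  (hX : ContDiffOn ℝ 2 X SS)



include hX in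
/-- slice differentiability in `t` -/
lemma partial_t {s : ℝ} {t : ℂ} (hmem : (s, t) ∈ SS) :
    HasFDerivAt (fun t' => X (s, t'))
      ((fderivWithin ℝ X SS (s, t)).comp (ContinuousLinearMap.inr ℝ ℝ ℂ)) t := by
  have hdiff : DifferentiableWithinAt ℝ X SS (s, t) :=
    (hX.differentiableOn (by norm_num)) _ hmem
  have hι : HasFDerivAt (fun t' : ℂ => ((s : ℝ), t'))
      (ContinuousLinearMap.inr ℝ ℝ ℂ) t := by
    simpa using ((ContinuousLinearMap.inr ℝ ℝ ℂ).hasFDerivAt (x := t)).const_add ((s:ℝ), (0:ℂ))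
  have hmaps : Set.MapsTo (fun t' : ℂ => ((s:ℝ), t')) univ SS :=
    fun t' _ => mem_SS.2 (mem_SS.1 hmem)
  have := (hdiff.hasFDerivWithinAt.comp t (hι.hasFDerivWithinAt) hmaps)
  rw [← hasFDerivWithinAt_univ]
  exact this

include hX in
lemma partial_s (hode : ∀ t : ℂ, ∀ s ∈ Icc (0:ℝ) 1,
      HasDerivWithinAt (fun s' => X (s', t)) (X (s, t) * !![0, t * f s; g s, 0])
        (Icc (0:ℝ) 1) s)
    {s : ℝ} {t : ℂ} (hmem : (s, t) ∈ SS) :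
    fderivWithin ℝ X SS (s, t) ((1:ℝ), (0:ℂ)) = X (s, t) * !![0, t * f s; g s, 0] := by
  have hdiff : DifferentiableWithinAt ℝ X SS (s, t) :=
    (hX.differentiableOn (by norm_num)) _ hmem
  have hι : HasDerivWithinAt (fun s' : ℝ => ((s' : ℝ), t)) ((1:ℝ), (0:ℂ)) (Icc 0 1) s :=
    ((hasDerivAt_id s).prodMk (hasDerivAt_const s t)).hasDerivWithinAt
  have hmaps : Set.MapsTo (fun s' : ℝ => ((s':ℝ), t)) (Icc (0:ℝ) 1) SS :=
    fun s' hs' => mem_SS.2 hs'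
  have h1 : HasDerivWithinAt (fun s' => X (s', t))
      (fderivWithin ℝ X SS (s, t) ((1:ℝ), (0:ℂ))) (Icc 0 1) s :=
    hdiff.hasFDerivWithinAt.comp_hasDerivWithinAt s hι hmaps
  have h2 := hode t s (mem_SS.1 hmem)
  have hu : UniqueDiffWithinAt ℝ (Icc (0:ℝ) 1) s := (uniqueDiffOn_Icc one_pos) s (mem_SS.1 hmem)
  rw [← h1.derivWithin hu, ← h2.derivWithin hu]
end slices

lemma SS_mem_nhds {s : ℝ} {t : ℂ} (hs : s ∈ Ioo (0:ℝ) 1) : SS ∈ nhds ((s : ℝ), t) := by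
  apply Filter.mem_of_superset ((isOpen_Ioo.prod isOpen_univ).mem_nhds ⟨hs, mem_univ t⟩)
  exact Set.prod_mono Ioo_subset_Icc_self (subset_refl _)

lemma Amat_eq (a b : ℂ) (t : ℂ) : !![0, t * a; b, 0] = t • !![0, a; 0, 0] + !![0, 0; b, 0] := by
  ext i j; fin_cases i <;> fin_cases j <;> simp

section key
variable (f g : ℝ → ℂ) (X : ℝ × ℂ → E2)
  (hX : ContDiffOn ℝ 2 X SS)
  (hode : ∀ t : ℂ, ∀ s ∈ Icc (0:ℝ) 1,
      HasDerivWithinAt (fun s' => X (s', t)) (X (s, t) * !![0, t * f s; g s, 0])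
        (Icc (0:ℝ) 1) s)

include hX hode in
lemma keyODE (t v : ℂ) {s : ℝ} (hs : s ∈ Ioo (0:ℝ) 1) :
    HasDerivAt (fun s' => fderivWithin ℝ X SS (s', t) ((0:ℝ), v))
      (fderivWithin ℝ X SS (s, t) ((0:ℝ), v) * !![0, t * f s; g s, 0]
        + X (s, t) * (v • !![0, f s; 0, 0])) s := by
  set A : ℝ → ℂ → E2 := fun s' t' => !![0, t' * f s'; g s', 0] with hA
  set B : ℝ → E2 := fun s' => !![0, f s'; 0, 0] with hB
  have hnhds : SS ∈ nhds ((s:ℝ), t) := SS_mem_nhds hs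
  have hX2at : ContDiffAt ℝ 2 X (s, t) := hX.contDiffAt hnhds
  set f2 := fderiv ℝ (fderiv ℝ X) ((s:ℝ), t) with hf2
  have hsymm : ∀ w w', f2 w w' = f2 w' w := hX2at.isSymmSndFDerivAt (by simp)
  have hfder :=
    ((hX2at.fderiv_right (m := 1) (by norm_num)).differentiableAt one_ne_zero).hasFDerivAt
  -- step 1 : s-derivative of the genuine fderiv slice
  have hι₂ : HasDerivAt (fun s' : ℝ => ((s' : ℝ), t)) ((1:ℝ), (0:ℂ)) s :=
    (hasDerivAt_id s).prodMk (hasDerivAt_const s t)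
  have step1 : HasDerivAt (fun s' => fderiv ℝ X (s', t)) (f2 ((1:ℝ), (0:ℂ))) s :=
    by have := hfder.comp_hasDerivAt s hι₂; exact this
  have step1' : HasDerivAt (fun s' => fderiv ℝ X (s', t) ((0:ℝ), v))
      (f2 ((1:ℝ), (0:ℂ)) ((0:ℝ), v)) s := by
    exact (step1.clm_apply (hasDerivAt_const s ((0:ℝ), v))).congr_deriv
      (by erw [ContinuousLinearMap.map_zero, add_zero]; rfl)
  -- transfer to fderivWithin
  have hev : (fun s' => fderivWithin ℝ X SS (s', t) ((0:ℝ), v))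
      =ᶠ[nhds s] (fun s' => fderiv ℝ X (s', t) ((0:ℝ), v)) := by
    filter_upwards [Ioo_mem_nhds hs.1 hs.2] with s' hs'
    rw [fderivWithin_of_mem_nhds (SS_mem_nhds hs')]
  -- step 2 : t-fderiv of the s-partial
  have hι : HasFDerivAt (fun t' : ℂ => ((s : ℝ), t'))
      (ContinuousLinearMap.inr ℝ ℝ ℂ) t := by
    simpa using ((ContinuousLinearMap.inr ℝ ℝ ℂ).hasFDerivAt (x := t)).const_add ((s:ℝ), (0:ℂ))
  set e : ((ℝ × ℂ) →L[ℝ] E2) →L[ℝ] E2 := ContinuousLinearMap.apply ℝ E2 ((1:ℝ), (0:ℂ))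
  have step2 : HasFDerivAt (fun t' => fderiv ℝ X (s, t') ((1:ℝ), (0:ℂ)))
      (e.comp (f2.comp (ContinuousLinearMap.inr ℝ ℝ ℂ))) t :=
    by have := e.hasFDerivAt.comp t (hfder.comp t hι); exact this
  -- step 3 : product rule for X(s,·) * A s ·
  have hXt : HasFDerivAt (fun t' => X (s, t'))
      ((fderivWithin ℝ X SS (s, t)).comp (ContinuousLinearMap.inr ℝ ℝ ℂ)) t :=
    partial_t X hX (mem_SS.2 (mem_of_mem_nhds hnhds).1)
  have hAt : HasFDerivAt (fun t' : ℂ => A s t')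
      ((ContinuousLinearMap.id ℝ ℂ).smulRight (B s)) t := by
    have h1 : (fun t' : ℂ => A s t') = fun t' : ℂ => t' • B s + !![0, 0; g s, 0] := by
      funext t'; exact Amat_eq (f s) (g s) t'
    rw [h1]
    exact (((ContinuousLinearMap.id ℝ ℂ).smulRight (B s)).hasFDerivAt).add_const _
  have step3 : HasFDerivAt (fun t' => X (s, t') * A s t')
      (mulL.precompR ℂ (X (s, t))
          ((ContinuousLinearMap.id ℝ ℂ).smulRight (B s))
        + mulL.precompL ℂ
          ((fderivWithin ℝ X SS (s, t)).comp (ContinuousLinearMap.inr ℝ ℝ ℂ)) (A s t)) t :=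
    mulL.hasFDerivAt_of_bilinear hXt hAt
  -- the two functions agree
  have hfun : (fun t' => fderiv ℝ X (s, t') ((1:ℝ), (0:ℂ)))
      = fun t' => X (s, t') * A s t' := by
    funext t'
    rw [← fderivWithin_of_mem_nhds (SS_mem_nhds (t := t') hs)]
    exact partial_s f g X hX hode (mem_SS.2 ⟨hs.1.le, hs.2.le⟩)
  rw [hfun] at step2
  have huniq := step2.unique step3
  have hval : f2 ((0:ℝ), v) ((1:ℝ), (0:ℂ))
      = X (s, t) * (v • B s) + fderivWithin ℝ X SS (s, t) ((0:ℝ), v) * A s t := by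
    have := congrArg (fun (L : ℂ →L[ℝ] E2) => L v) huniq
    exact this
  refine (step1'.congr_of_eventuallyEq hev).congr_deriv ?_
  rw [hsymm ((1:ℝ), (0:ℂ)) ((0:ℝ), v), hval, add_comm]
end key

/-- Uniqueness for the affine matrix ODE `x' = x * A s + c s` on `[0,1]`. -/
lemma uniq01 {Afun c : ℝ → E2} (hAc : ContinuousOn Afun (Icc 0 1))
    {φ ψ : ℝ → E2}
    (hφc : ContinuousOn φ (Icc 0 1)) (hψc : ContinuousOn ψ (Icc 0 1))
    (hφd : ∀ s ∈ Ioo (0:ℝ) 1, HasDerivAt φ (φ s * Afun s + c s) s)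
    (hψd : ∀ s ∈ Ioo (0:ℝ) 1, HasDerivAt ψ (ψ s * Afun s + c s) s)
    (h0 : φ 0 = ψ 0) : EqOn φ ψ (Icc 0 1) := by
  obtain ⟨K, hK⟩ := isCompact_Icc.exists_bound_of_continuousOn hAc
  set σ : ℝ → ℝ := fun s => min 1 (max 0 s) with hσ
  have hσmem : ∀ s, σ s ∈ Icc (0:ℝ) 1 := fun s =>
    ⟨le_min zero_le_one (le_max_left 0 s), min_le_left _ _⟩
  have hσid : ∀ s ∈ Icc (0:ℝ) 1, σ s = s := fun s hs => by
    simp [hσ, max_eq_right hs.1, min_eq_right hs.2]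
  set v : ℝ → E2 → E2 := fun s x => x * Afun (σ s) + c (σ s) with hv
  have hlip : ∀ s, LipschitzWith (2 * max K 0).toNNReal (v s) := by
    intro s
    apply LipschitzWith.of_dist_le_mul
    intro x y
    have h1 : v s x - v s y = (x - y) * Afun (σ s) := by
      simp only [hv]; noncomm_ring
    rw [dist_eq_norm, dist_eq_norm, h1]
    calc ‖(x - y) * Afun (σ s)‖ ≤ 2 * ‖x - y‖ * ‖Afun (σ s)‖ := norm_matmul_le _ _
      _ ≤ 2 * ‖x - y‖ * max K 0 := by
          refine mul_le_mul_of_nonneg_left ((hK _ (hσmem s)).trans (le_max_left _ _)) ?_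
          positivity
      _ = (2 * max K 0).toNNReal * ‖x - y‖ := by
          rw [Real.coe_toNNReal _ (by positivity)]; ring
  refine myUnique hlip hφc ?_ hψc ?_ h0
  · intro s hs
    have := hφd s hs
    simp only [hv, hσid s (Ioo_subset_Icc_self hs)]; exact this
  · intro s hs
    have := hψd s hs
    simp only [hv, hσid s (Ioo_subset_Icc_self hs)]; exact this

/-- Cauchy–Riemann: an ℝ-differentiable map `ℂ → E2` whose differential is ℂ-linear
on the basis is ℂ-differentiable. -/
lemma complexify {h : ℂ → E2} {L : ℂ →L[ℝ] E2} {t : ℂ}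
    (hd : HasFDerivAt h L t) (hCR : L Complex.I = Complex.I • L 1) :
    HasDerivAt h (L 1) t := by
  set L' : ℂ →L[ℂ] E2 := ContinuousLinearMap.smulRight (ContinuousLinearMap.id ℂ ℂ) (L 1)
    with hL'
  have hext : L'.restrictScalars ℝ = L := by
    refine ContinuousLinearMap.ext fun w => ?_
    have hw : w = (w.re : ℝ) • (1:ℂ) + (w.im : ℝ) • Complex.I := by
      simp [Complex.real_smul, Complex.re_add_im]
    have h1 : (L'.restrictScalars ℝ) w = w • L 1 := by simp [hL']
    rw [h1]
    conv_lhs => rw [hw]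
    conv_rhs => rw [hw]
    rw [L.map_add, L.map_smul, L.map_smul, hCR]
    rw [add_smul, smul_assoc, smul_assoc, one_smul]
  have : HasFDerivAt h L' t := hasFDerivAt_of_restrictScalars ℝ hd hext
  have := this.hasDerivAt
  simpa [hL'] using this

lemma ibp {f g : ℝ → ℂ} (hf : ContinuousOn f (Icc 0 1)) (hg : ContinuousOn g (Icc 0 1))
    (hgint : (∫ s in (0:ℝ)..1, g s) = 0) :
    (∫ s in (0:ℝ)..1, g s * ∫ u in (0:ℝ)..s, f u * ∫ v in (0:ℝ)..u, g v)
      = -(∫ s in (0:ℝ)..1, f s * (∫ v in (0:ℝ)..s, g v) ^ 2) := by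
  set G : ℝ → ℂ := fun s => ∫ v in (0:ℝ)..s, g v with hG
  have hGc : ContinuousOn G (Icc 0 1) := prim_cont hg
  have hfG : ContinuousOn (fun u => f u * G u) (Icc 0 1) := hf.mul hGc
  set H : ℝ → ℂ := fun s => ∫ u in (0:ℝ)..s, f u * G u with hH
  have hHc : ContinuousOn H (Icc 0 1) := prim_cont hfG
  set Φ : ℝ → ℂ := fun s => G s * H s with hΦ
  set Φ' : ℝ → ℂ := fun s => g s * H s + f s * (G s) ^ 2 with hΦ'
  have hΦd : ∀ s ∈ Ioo (0:ℝ) 1, HasDerivAt Φ (Φ' s) s := by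
    intro s hs
    have h1 := (prim_deriv hg hs).mul (prim_deriv hfG hs)
    have : g s * H s + G s * (f s * G s) = Φ' s := by rw [hΦ']; ring
    rw [← this]
    exact h1
  have hint : IntervalIntegrable Φ' MeasureTheory.volume 0 1 := by
    apply ContinuousOn.intervalIntegrable
    rw [uIcc_of_le zero_le_one]
    exact (hg.mul hHc).add (hf.mul (hGc.pow 2))
  have heq : (∫ s in (0:ℝ)..1, Φ' s) = Φ 1 - Φ 0 := by
    refine intervalIntegral.integral_eq_sub_of_hasDeriv_right_of_le zero_le_one
      (hGc.mul hHc) (fun s hs => (hΦd s hs).hasDerivWithinAt) hint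
  have hΦ1 : Φ 1 = 0 := by
    have : G 1 = 0 := hgint
    simp [hΦ, this]
  have hΦ0 : Φ 0 = 0 := by simp [hΦ, hG]
  rw [hΦ1, hΦ0, sub_zero] at heq
  have hsplit : (∫ s in (0:ℝ)..1, Φ' s)
      = (∫ s in (0:ℝ)..1, g s * H s) + ∫ s in (0:ℝ)..1, f s * (G s) ^ 2 := by
    rw [hΦ']
    apply intervalIntegral.integral_add
    · apply ContinuousOn.intervalIntegrable
      rw [uIcc_of_le zero_le_one]; exact hg.mul hHc
    · apply ContinuousOn.intervalIntegrable
      rw [uIcc_of_le zero_le_one]; exact hf.mul (hGc.pow 2)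
  rw [hsplit] at heq
  have h2 : (∫ s in (0:ℝ)..1, g s * H s) = -(∫ s in (0:ℝ)..1, f s * (G s) ^ 2) := by
    rw [eq_neg_iff_add_eq_zero]; exact heq
  exact h2

set_option maxHeartbeats 1600000 in
/-- Corollary 2.6: the second `λ`-derivative of the monodromy `M̃(λ) = M(λ⁻¹(λ−1)²)` at
the Sym point `λ = 1` equals `2·[[−I₁, I₀],[I₂, I₁]]`. -/
theorem second_derivative_of_monodromy (f g : ℝ → ℂ)
    (hf : ContinuousOn f (Set.Icc 0 1)) (hg : ContinuousOn g (Set.Icc 0 1))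
    (X : ℝ × ℂ → Matrix (Fin 2) (Fin 2) ℂ)
    (hX : ContDiffOn ℝ 2 X (Set.Icc (0:ℝ) 1 ×ˢ Set.univ))
    (hode : ∀ t : ℂ, ∀ s ∈ Set.Icc (0:ℝ) 1,
      HasDerivWithinAt (fun s' => X (s', t)) (X (s, t) * !![0, t * f s; g s, 0])
        (Set.Icc (0:ℝ) 1) s)
    (hinit : ∀ t : ℂ, X (0, t) = 1)
    (M : ℂ → Matrix (Fin 2) (Fin 2) ℂ) (hM : M = fun t => X (1, t))
    (hgint : (∫ s in (0:ℝ)..1, g s) = 0)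
    (I₀ I₁ I₂ : ℂ)
    (hI₀ : I₀ = ∫ s in (0:ℝ)..1, f s)
    (hI₁ : I₁ = ∫ s in (0:ℝ)..1, f s * ∫ v in (0:ℝ)..s, g v)
    (hI₂ : I₂ = ∫ s in (0:ℝ)..1, g s * ∫ u in (0:ℝ)..s, f u * ∫ v in (0:ℝ)..u, g v) :
    iteratedDeriv 2 (fun l : ℂ => M (l⁻¹ * (l - 1) ^ 2)) 1 =
      (2 : ℂ) • !![-I₁, I₀; I₂, I₁] := by
  classical
  have hX' : ContDiffOn ℝ 2 X SS := hX
  set F : ℝ × ℂ → ((ℝ × ℂ) →L[ℝ] E2) := fderivWithin ℝ X SS with hFdef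
  have hSuniq : UniqueDiffOn ℝ SS := (uniqueDiffOn_Icc one_pos).prod uniqueDiffOn_univ
  set G : ℝ → ℂ := fun s => ∫ v in (0:ℝ)..s, g v with hGdef
  have hGc : ContinuousOn G (Icc 0 1) := prim_cont hg
  set Ebl : E2 := !![0, 0; 1, 0] with hEbl
  set P : ℝ → E2 := fun s => 1 + G s • Ebl with hPdef
  have hPc : ContinuousOn P (Icc 0 1) :=
    continuousOn_const.add (hGc.smul continuousOn_const)
  -- continuity of the coefficient matrix
  have hAcont : ∀ t : ℂ, ContinuousOn (fun s => !![0, t * f s; g s, 0] : ℝ → E2) (Icc 0 1) := by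
    intro t
    have heq : (fun s => !![0, t * f s; g s, 0] : ℝ → E2)
        = fun s => f s • !![(0:ℂ), t; 0, 0] + g s • !![0, 0; 1, 0] := by
      funext s; ext i j; fin_cases i <;> fin_cases j <;> simp [mul_comm]
    rw [heq]
    exact (hf.smul continuousOn_const).add (hg.smul continuousOn_const)
  -- continuity of slices
  have hXcont : ∀ t : ℂ, ContinuousOn (fun s => X (s, t)) (Icc 0 1) := by
    intro t
    exact hX'.continuousOn.comp (by fun_prop) (fun s hs => mem_SS.2 hs)
  have hFcont : ∀ (t v : ℂ), ContinuousOn (fun s => F (s, t) ((0:ℝ), v)) (Icc 0 1) := by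
    intro t v
    have hF1 := hX'.fderivWithin hSuniq (m := 1) (by norm_num)
    exact (ContinuousLinearMap.apply ℝ E2 ((0:ℝ), v)).continuous.comp_continuousOn
      (hF1.continuousOn.comp (by fun_prop) (fun s hs => mem_SS.2 hs))
  -- initial value of t-derivative
  have hF0 : ∀ (t v : ℂ), F ((0:ℝ), t) ((0:ℝ), v) = 0 := by
    intro t v
    have h1 := partial_t X hX' (mem_SS.2 (left_mem_Icc.2 zero_le_one)) (t := t)
    have h2 : HasFDerivAt (fun t' : ℂ => X (0, t')) (0 : ℂ →L[ℝ] E2) t := by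
      have : (fun t' : ℂ => X (0, t')) = fun _ => (1 : E2) := funext hinit
      rw [this]; exact hasFDerivAt_const (1 : E2) t
    have h3 := h1.unique h2
    have := congrArg (fun (L : ℂ →L[ℝ] E2) => L v) h3
    simpa using this
  -- X (s, 0) = P s
  have hXP : EqOn (fun s => X (s, 0)) P (Icc 0 1) := by
    refine uniq01 (Afun := fun s => !![0, (0:ℂ) * f s; g s, 0]) (c := fun _ => 0)
      (hAcont 0) (hXcont 0) hPc ?_ ?_ ?_
    · intro s hs
      have h := (hode 0 s (Ioo_subset_Icc_self hs)).hasDerivAt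
        (Icc_mem_nhds hs.1 hs.2)
      simp only [zero_mul, add_zero] at h ⊢; exact h
    · intro s hs
      have h : HasDerivAt P (g s • Ebl) s :=
        ((prim_deriv hg hs).smul_const Ebl).const_add 1
      have hid : P s * !![0, (0:ℂ) * f s; g s, 0] + 0 = g s • Ebl := by
        ext i j
        fin_cases i <;> fin_cases j <;>
          simp [hPdef, hEbl, Matrix.mul_apply, Matrix.one_apply, Fin.sum_univ_two] <;> ring
      rw [← hid] at h
      exact h
    · have : P 0 = 1 := by simp [hPdef, hGdef]
      rw [this]
      simpa using hinit 0
  -- Cauchy-Riemann relations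
  have hCR : ∀ (t : ℂ), ∀ s ∈ Icc (0:ℝ) 1,
      F (s, t) ((0:ℝ), Complex.I) = Complex.I • F (s, t) ((0:ℝ), (1:ℂ)) := by
    intro t s hsI
    have key : EqOn (fun s => F (s, t) ((0:ℝ), Complex.I)
        - Complex.I • F (s, t) ((0:ℝ), (1:ℂ))) (fun _ => 0) (Icc 0 1) := by
      refine uniq01 (Afun := fun s => !![0, t * f s; g s, 0]) (c := fun _ => 0)
        (hAcont t) ((hFcont t Complex.I).sub ((hFcont t 1).const_smul Complex.I))
        continuousOn_const ?_ ?_ ?_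
      · intro s hs
        have k1 := keyODE f g X hX' hode t Complex.I hs
        have k2 := keyODE f g X hX' hode t 1 hs
        have h := k1.sub (k2.const_smul Complex.I)
        have hrw : (F (s, t) ((0:ℝ), Complex.I) * !![0, t * f s; g s, 0]
              + X (s, t) * (Complex.I • !![0, f s; 0, 0]))
            - Complex.I • (F (s, t) ((0:ℝ), (1:ℂ)) * !![0, t * f s; g s, 0]
              + X (s, t) * ((1:ℂ) • !![0, f s; 0, 0]))
            = (F (s, t) ((0:ℝ), Complex.I) - Complex.I • F (s, t) ((0:ℝ), (1:ℂ)))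
                * !![0, t * f s; g s, 0] + 0 := by
          rw [one_smul, smul_add, sub_mul, smul_mul_assoc, mul_smul_comm]
          abel
        rw [hrw] at h
        exact h
      · intro s hs
        have h0 := hasDerivAt_const s (0 : E2); simp; exact h0
      · simp [hF0]
    have := key hsI
    have h2 : F (s, t) ((0:ℝ), Complex.I) - Complex.I • F (s, t) ((0:ℝ), (1:ℂ)) = 0 := this
    rw [sub_eq_zero] at h2
    exact h2
  -- complex differentiability of M
  have hMd : ∀ t : ℂ, HasDerivAt M (F ((1:ℝ), t) ((0:ℝ), (1:ℂ))) t := by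
    intro t
    have h1 := partial_t X hX' (mem_SS.2 (right_mem_Icc.2 zero_le_one)) (t := t)
    have hcr : ((F ((1:ℝ), t)).comp (ContinuousLinearMap.inr ℝ ℝ ℂ)) Complex.I
        = Complex.I • ((F ((1:ℝ), t)).comp (ContinuousLinearMap.inr ℝ ℝ ℂ)) 1 := by
      simpa using hCR t 1 (right_mem_Icc.2 zero_le_one)
    have h2 := complexify h1 hcr
    rw [hM]
    simpa using h2
  have hMdiff : Differentiable ℂ M := fun t => (hMd t).differentiableAt
  haveI : CompleteSpace E2 := FiniteDimensional.complete ℂ E2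
  have hAnal : AnalyticOnNhd ℂ M univ := hMdiff.differentiableOn.analyticOnNhd isOpen_univ
  have hderivM : Differentiable ℂ (deriv M) := fun t =>
    ((hAnal.deriv) t (mem_univ t)).differentiableAt
  -- the explicit first variation
  set J0 : ℝ → ℂ := fun s => ∫ u in (0:ℝ)..s, f u with hJ0
  set J1 : ℝ → ℂ := fun s => ∫ u in (0:ℝ)..s, f u * G u with hJ1
  set J3 : ℝ → ℂ := fun s => ∫ u in (0:ℝ)..s, f u * (G u) ^ 2 with hJ3
  have hfG : ContinuousOn (fun u => f u * G u) (Icc 0 1) := hf.mul hGc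
  have hfG2 : ContinuousOn (fun u => f u * (G u) ^ 2) (Icc 0 1) := hf.mul (hGc.pow 2)
  set Cm : ℝ → E2 := fun s => J0 s • !![(0:ℂ), 1; 0, 0] + J1 s • !![(-1:ℂ), 0; 0, 1]
    + J3 s • !![(0:ℂ), 0; -1, 0] with hCm
  have hCmc : ContinuousOn Cm (Icc 0 1) :=
    (((prim_cont hf).smul continuousOn_const).add
      ((prim_cont hfG).smul continuousOn_const)).add
      ((prim_cont hfG2).smul continuousOn_const)
  have hZW : EqOn (fun s => F (s, 0) ((0:ℝ), (1:ℂ))) (fun s => Cm s * P s) (Icc 0 1) := by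
    refine uniq01 (Afun := fun s => !![0, (0:ℂ) * f s; g s, 0]) (c := fun s => P s * !![0, f s; 0, 0])
      (hAcont 0) (hFcont 0 1) ?_ ?_ ?_ ?_
    · have hc1 : Continuous (fun q : E2 × E2 => mulL q.1 q.2) :=
        mulL.isBoundedBilinearMap.continuous
      have hc2 : ContinuousOn (fun s => (Cm s, P s)) (Icc 0 1) := hCmc.prodMk hPc
      exact hc1.comp_continuousOn hc2
    · intro s hs
      have k := keyODE f g X hX' hode 0 1 hs
      have hx : X (s, 0) = P s := hXP (Ioo_subset_Icc_self hs)
      rw [hx] at k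
      simpa using k
    · intro s hs
      have hCm' : HasDerivAt Cm (f s • !![(0:ℂ), 1; 0, 0]
          + (f s * G s) • !![(-1:ℂ), 0; 0, 1]
          + (f s * (G s) ^ 2) • !![(0:ℂ), 0; -1, 0]) s := by
        exact (((prim_deriv hf hs).smul_const _).add
          ((prim_deriv hfG hs).smul_const _)).add
          ((prim_deriv hfG2 hs).smul_const _)
      have hP' : HasDerivAt P (g s • Ebl) s :=
        ((prim_deriv hg hs).smul_const Ebl).const_add 1
      have h := hCm'.matmul hP'
      have hid1 : P s * !![0, (0:ℂ) * f s; g s, 0] = g s • Ebl := by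
        ext i j
        fin_cases i <;> fin_cases j <;>
          simp [hPdef, hEbl, Matrix.mul_apply, Matrix.one_apply, Fin.sum_univ_two] <;> ring
      have hid2 : (f s • !![(0:ℂ), 1; 0, 0] + (f s * G s) • !![(-1:ℂ), 0; 0, 1]
          + (f s * (G s) ^ 2) • !![(0:ℂ), 0; -1, 0]) * P s
          = P s * !![0, f s; 0, 0] := by
        ext i j
        fin_cases i <;> fin_cases j <;>
          simp [hPdef, hEbl, Matrix.mul_apply, Matrix.one_apply, Matrix.add_apply,
            Fin.sum_univ_two] <;> ring
      have hrw : (f s • !![(0:ℂ), 1; 0, 0] + (f s * G s) • !![(-1:ℂ), 0; 0, 1]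
            + (f s * (G s) ^ 2) • !![(0:ℂ), 0; -1, 0]) * P s + Cm s * (g s • Ebl)
          = Cm s * P s * !![0, (0:ℂ) * f s; g s, 0] + P s * !![0, f s; 0, 0] := by
        rw [hid2, ← hid1, ← mul_assoc]
        abel
      rw [hrw] at h
      exact h
    · have h1 : Cm 0 = 0 := by
        simp only [hCm, hJ0, hJ1, hJ3]
        norm_num
      show F ((0:ℝ), 0) ((0:ℝ), (1:ℂ)) = Cm 0 * P 0
      rw [hF0 0 1, h1, zero_mul]
  -- value of deriv M at 0
  have hP1 : P 1 = 1 := by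
    have : G 1 = 0 := hgint
    simp [hPdef, this]
  have hderivM0 : deriv M 0 = !![-I₁, I₀; I₂, I₁] := by
    have h1 : deriv M 0 = F ((1:ℝ), 0) ((0:ℝ), (1:ℂ)) := (hMd 0).deriv
    have h2 := hZW (right_mem_Icc.2 zero_le_one)
    simp only at h2
    rw [h1, h2, hP1, mul_one]
    have hJ0v : J0 1 = I₀ := hI₀.symm
    have hJ1v : J1 1 = I₁ := hI₁.symm
    have hJ3v : J3 1 = -I₂ := by
      rw [hI₂, ibp hf hg hgint]; simp [hJ3, hGdef]
    rw [hCm]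
    simp only [hJ0v, hJ1v, hJ3v]
    ext i j
    fin_cases i <;> fin_cases j <;> simp <;> ring
  -- chain rule
  set φfun : ℂ → ℂ := fun l => l⁻¹ * (l - 1) ^ 2 with hφfun
  set φd : ℂ → ℂ := fun l => -(l ^ 2)⁻¹ * (l - 1) ^ 2 + l⁻¹ * (2 * (l - 1)) with hφd
  have hφderiv : ∀ l : ℂ, l ≠ 0 → HasDerivAt φfun (φd l) l := by
    intro l hl
    have h1 : HasDerivAt (fun y : ℂ => y⁻¹) (-(l ^ 2)⁻¹) l := hasDerivAt_inv hl
    have h2 : HasDerivAt (fun y : ℂ => (y - 1) ^ 2) (2 * (l - 1)) l := by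
      have := ((hasDerivAt_id l).sub_const 1).fun_pow 2
      simpa using this
    have := h1.fun_mul h2
    simpa [hφd, mul_comm] using this
  have hφ1 : φfun 1 = 0 := by simp [hφfun]
  have hφd1 : φd 1 = 0 := by simp [hφd]
  have hFd : ∀ l : ℂ, l ≠ 0 →
      HasDerivAt (fun l' => M (φfun l')) (φd l • deriv M (φfun l)) l := by
    intro l hl
    exact ((hMdiff (φfun l)).hasDerivAt).scomp l (hφderiv l hl)
  have hevent : deriv (fun l' => M (φfun l')) =ᶠ[nhds 1] fun l => φd l • deriv M (φfun l) := by
    filter_upwards [isOpen_compl_singleton.mem_nhds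
      (by norm_num : (1:ℂ) ∈ ({0}ᶜ : Set ℂ))] with l hl
    exact (hFd l hl).deriv
  have hfinal : HasDerivAt (fun l => φd l • deriv M (φfun l)) ((2:ℂ) • deriv M 0) 1 := by
    have hc : HasDerivAt φd 2 1 := by
      have h1 := (((hasDerivAt_id (1:ℂ)).fun_pow 2).fun_inv (by norm_num)).fun_neg
      have h2 := ((hasDerivAt_id (1:ℂ)).sub_const 1).fun_pow 2
      have h3 := hasDerivAt_inv (one_ne_zero (α := ℂ))
      have h4 := ((hasDerivAt_id (1:ℂ)).sub_const 1).const_mul (2:ℂ)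
      have h := (h1.fun_mul h2).fun_add (h3.fun_mul h4)
      exact h.congr_deriv (by norm_num)
    have hFm : HasDerivAt (fun l => deriv M (φfun l)) 0 1 := by
      have := ((hderivM (φfun 1)).hasDerivAt).scomp 1 (hφderiv 1 one_ne_zero)
      rw [hφd1, zero_smul] at this
      exact this
    have hh := hc.fun_smul hFm
    rw [hφd1, hφ1] at hh
    simp only [smul_zero, zero_add] at hh; exact hh
  have hgoal : iteratedDeriv 2 (fun l : ℂ => M (l⁻¹ * (l - 1) ^ 2)) 1
      = deriv (deriv (fun l => M (φfun l))) 1 := by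
    rw [iteratedDeriv_succ, iteratedDeriv_one]
    rfl
  rw [hgoal]; erw [hevent.deriv_eq, hfinal.deriv, hderivM0]
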